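/- arXiv:2304.01421 — 2 statements merged into one kernel-verified Lean document; each statement's English description precedes it below -/
import Mathlib

section
/- Let Λ be a commutative ring equipped with a ring endomorphism ψ and an ideal I ⊆ Λ with a finite filtration I = F¹ ⊇ F² ⊇ ⋯ ⊇ F^N = 0 by ideals preserved by ψ, such that ψ acts on F^n/F^{n+1} as multiplication by ℓ^n for a fixed integer ℓ ≥ 2. Then for every x ∈ I there exists i ∈ ℕ with ψ^i(x) ∈ ℓ·I, and every ℓ-torsion element of I is killed by some power of ψ. -/
open TensorProduct

noncomputable section

/-- `ℤ[1/ℓ]`. -/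
abbrev Zloc (ℓ : ℤ) : Type := Localization.Away ℓ

/-- `A[1/ℓ] = ℤ[1/ℓ] ⊗_ℤ A`. -/
abbrev loc (ℓ : ℤ) (A : Type) [AddCommGroup A] : Type := Zloc ℓ ⊗[ℤ] A

/-- The map `A → A[1/ℓ]`, `a ↦ 1 ⊗ a`. -/
def toLoc (ℓ : ℤ) (A : Type) [AddCommGroup A] : A →+ loc ℓ A :=
  ((TensorProduct.mk ℤ (Zloc ℓ) A) 1).toAddMonoidHom

/-- The induced endomorphism `θ[1/ℓ]` of `A[1/ℓ]`. -/
def locMap (ℓ : ℤ) {A : Type} [AddCommGroup A] (θ : A →+ A) : loc ℓ A →+ loc ℓ A :=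
  (LinearMap.lTensor (Zloc ℓ) θ.toIntLinearMap).toAddMonoidHom

/-- The sequential colimit of `A → A → A → ⋯` along `θ`. -/
abbrev seqColim {A : Type} [AddCommGroup A] (θ : A →+ A) : Type :=
  AddCommGroup.DirectLimit (fun _ : ℕ => A)
    (fun i j _ => (show AddMonoid.End A from θ) ^ (j - i))

instance seqColim.instAddCommGroup {A : Type} [AddCommGroup A] (θ : A →+ A) :
    AddCommGroup (seqColim θ) :=
  AddCommGroup.DirectLimit.addCommGroup _ _

/-- The canonical map `A → colim_θ A` (at stage 0). -/
def seqColimOf {A : Type} [AddCommGroup A] (θ : A →+ A) : A →+ seqColim θ :=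
  AddCommGroup.DirectLimit.of (fun _ : ℕ => A)
    (fun i j _ => (show AddMonoid.End A from θ) ^ (j - i)) 0

/-- Combinatorial core of Proposition 2.4: for an ideal `I` of a commutative ring with a
finite `ψ`-stable filtration on which `ψ` acts as `ℓ^n` on the graded pieces, every
element of `I` is eventually sent into `ℓ·I`, and every `ℓ`-torsion element of `I` is
killed by some power of `ψ`. -/
theorem adams_ideal_conditions {Λ : Type} [CommRing Λ] (ℓ : ℤ) (hℓ : 2 ≤ ℓ)
    (ψ : Λ →+* Λ) (I : Ideal Λ) (N : ℕ) (F : ℕ → Ideal Λ)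
    (hF1 : F 1 = I) (hFN : F N = ⊥)
    (hanti : ∀ n, F (n + 1) ≤ F n)
    (hstab : ∀ n, ∀ x ∈ F n, ψ x ∈ F n)
    (hgr : ∀ n, ∀ x ∈ F n, ψ x - ℓ ^ n • x ∈ F (n + 1)) :
    (∀ x ∈ I, ∃ i : ℕ, ∃ y ∈ I, (⇑ψ)^[i] x = ℓ • y)
      ∧ (∀ x ∈ I, ℓ • x = 0 → ∃ i : ℕ, (⇑ψ)^[i] x = 0) := by
  have hmono : ∀ n m : ℕ, n ≤ m → F m ≤ F n := by
    intro n m h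
    induction h with
    | refl => exact le_rfl
    | step _ ih => exact le_trans (hanti _) ih
  have hstabIt : ∀ (k n : ℕ) (x : Λ), x ∈ F n → (⇑ψ)^[k] x ∈ F n := by
    intro k
    induction k with
    | zero => intro n x hx; simpa using hx
    | succ k ih =>
        intro n x hx
        rw [Function.iterate_succ_apply]
        exact ih n _ (hstab n x hx)
  have hadd : ∀ (k : ℕ) (a b : Λ), (⇑ψ)^[k] (a + b) = (⇑ψ)^[k] a + (⇑ψ)^[k] b := by
    intro k
    induction k with
    | zero => simp
    | succ k ih => intro a b; simp [Function.iterate_succ_apply, map_add, ih]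
  have hsmul : ∀ (k : ℕ) (c : ℤ) (a : Λ), (⇑ψ)^[k] (c • a) = c • (⇑ψ)^[k] a := by
    intro k
    induction k with
    | zero => simp
    | succ k ih => intro c a; rw [Function.iterate_succ_apply, map_zsmul, ih, Function.iterate_succ_apply]
  have key : ∀ k n : ℕ, 1 ≤ n → N ≤ n + k → ∀ x ∈ F n,
      (∃ y ∈ F n, (⇑ψ)^[k] x = ℓ • y) ∧ (ℓ • x = 0 → (⇑ψ)^[k] x = 0) := by
    intro k
    induction k with
    | zero =>
        intro n h1 hN x hx
        have hx0 : x = 0 := by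
          have := hmono N n (by omega) hx
          rw [hFN] at this
          simpa using this
        exact ⟨⟨0, zero_mem _, by simp [hx0]⟩, fun _ => by simp [hx0]⟩
    | succ k ih =>
        intro n h1 hN x hx
        obtain ⟨m, rfl⟩ : ∃ m, n = m + 1 := ⟨n - 1, by omega⟩
        set z := ψ x - ℓ ^ (m + 1) • x with hzdef
        have hz : z ∈ F (m + 1 + 1) := hgr (m + 1) x hx
        obtain ⟨⟨y, hy, hyz⟩, htor⟩ := ih (m + 1 + 1) (by omega) (by omega) z hz
        have hψx : ψ x = ℓ ^ (m + 1) • x + z := by rw [hzdef]; abel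
        have hit : (⇑ψ)^[k + 1] x = ℓ ^ (m + 1) • (⇑ψ)^[k] x + (⇑ψ)^[k] z := by
          rw [Function.iterate_succ_apply, hψx, hadd, hsmul]
        constructor
        · refine ⟨ℓ ^ m • (⇑ψ)^[k] x + y, ?_, ?_⟩
          · exact add_mem (Submodule.smul_of_tower_mem _ _ (hstabIt k _ _ hx))
              (hanti _ hy)
          · rw [hit, hyz, smul_add, smul_smul, ← pow_succ']
        · intro hx0
          have hzn : ℓ ^ (m + 1) • x = 0 := by
            rw [pow_succ, mul_smul, hx0, smul_zero]
          have hz0 : ℓ • z = 0 := by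
            rw [hzdef, smul_sub, ← map_zsmul, hx0, map_zero, zero_sub, neg_eq_zero,
              smul_comm, hx0, smul_zero]
          rw [hit, htor hz0, add_zero, ← hsmul, hzn]
          simp
  rw [← hF1]
  constructor
  · intro x hx
    obtain ⟨⟨y, hy, hyz⟩, -⟩ := key N 1 le_rfl (by omega) x hx
    exact ⟨N, y, hy, hyz⟩
  · intro x hx h0
    obtain ⟨-, htor⟩ := key N 1 le_rfl (by omega) x hx
    exact ⟨N, htor h0⟩
end
end

section
/- Let Λ be a commutative ring with endomorphism ψ and ideal I with finite ψ-stable filtration F¹ = I ⊇ ⋯ ⊇ F^N = 0 such that ψ ≡ ℓ^n on F^n/F^{n+1} (ℓ ≥ 2). Then the endomorphism induced by ψ on I[1/ℓ] = ℤ[1/ℓ] ⊗ I is bijective. -/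
open TensorProduct

noncomputable section

/-- `lTensor` as an algebra hom on `ℤ`-linear endomorphisms. -/
def lTensorAlgHom (ℓ : ℤ) (A : Type) [AddCommGroup A] :
    Module.End ℤ A →ₐ[ℤ] Module.End ℤ (loc ℓ A) :=
  AlgHom.ofLinearMap (LinearMap.lTensorHom (M := Zloc ℓ))
    (LinearMap.lTensor_id (Zloc ℓ) A)
    (fun f g => LinearMap.lTensor_comp (Zloc ℓ) f g)

set_option maxHeartbeats 1000000 in
set_option synthInstance.maxHeartbeats 1000000 in
/-- With the setup of Proposition 2.4 for an ideal `I` with finite `ψ`-stable filtration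
(`ψ ≡ ℓ^n` on `Fⁿ/Fⁿ⁺¹`, `ℓ ≥ 2`), the endomorphism induced by `ψ` on
`I[1/ℓ] = ℤ[1/ℓ] ⊗ I` is bijective. -/
theorem adams_loc_bijective {Λ : Type} [CommRing Λ] (ℓ : ℤ) (hℓ : 2 ≤ ℓ)
    (ψ : Λ →+* Λ) (I : Ideal Λ) (N : ℕ) (F : ℕ → Ideal Λ)
    (hF1 : F 1 = I) (hFN : F N = ⊥)
    (hanti : ∀ n, F (n + 1) ≤ F n)
    (hstab : ∀ n, ∀ x ∈ F n, ψ x ∈ F n)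
    (hgr : ∀ n, ∀ x ∈ F n, ψ x - ℓ ^ n • x ∈ F (n + 1))
    (ψ' : I →+ I) (hψ' : ∀ x : I, (ψ' x : Λ) = ψ x) :
    Function.Bijective (locMap ℓ ψ') := by
  classical
  set φ : Module.End ℤ I := ψ'.toIntLinearMap with hφdef
  set p : Polynomial ℤ :=
    ∏ n ∈ Finset.Icc 1 (N - 1), (Polynomial.X - Polynomial.C (ℓ ^ n)) with hp
  -- key filtration claim
  have key : ∀ k : ℕ, ∀ x : I,
      ((Polynomial.aeval φ
          (∏ n ∈ Finset.Icc 1 k, (Polynomial.X - Polynomial.C (ℓ ^ n))) x : I) : Λ)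
        ∈ F (k + 1) := by
    intro k
    induction k with
    | zero =>
        intro x
        rw [show Finset.Icc 1 0 = (∅ : Finset ℕ) by simp]
        simpa using (hF1 ▸ x.2)
    | succ k ih =>
        intro x
        have hins : Finset.Icc 1 (k + 1) = insert (k + 1) (Finset.Icc 1 k) :=
          (Finset.insert_Icc_right_eq_Icc_add_one (by omega)).symm
        rw [hins, Finset.prod_insert (by simp), map_mul]
        set y : I := Polynomial.aeval φ
          (∏ n ∈ Finset.Icc 1 k, (Polynomial.X - Polynomial.C (ℓ ^ n))) x with hy
        have hyF : (y : Λ) ∈ F (k + 1) := ih x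
        have heval : (Polynomial.aeval φ (Polynomial.X - Polynomial.C (ℓ ^ (k + 1))) *
            Polynomial.aeval φ
              (∏ n ∈ Finset.Icc 1 k, (Polynomial.X - Polynomial.C (ℓ ^ n)))) x
            = φ y - (ℓ ^ (k + 1)) • y := by
          rw [Module.End.mul_apply, ← hy, map_sub, Polynomial.aeval_X, Polynomial.aeval_C,
            LinearMap.sub_apply, Module.algebraMap_end_apply]
        rw [heval]
        have hc : ((φ y - (ℓ ^ (k + 1)) • y : I) : Λ) = ψ (y : Λ) - ℓ ^ (k + 1) • (y : Λ) := by
          have : φ y = ψ' y := rfl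
          push_cast [this, hψ' y]
          rfl
        rw [hc]
        exact hgr (k + 1) _ hyF
  -- hence `p(φ) = 0`
  have hpφ : Polynomial.aeval φ p = 0 := by
    apply LinearMap.ext
    intro x
    rw [LinearMap.zero_apply]
    rcases Nat.eq_zero_or_pos N with hN | hN
    · have hb : F 0 = ⊥ := hN ▸ hFN
      have h10 : F 1 ≤ F 0 := hanti 0
      rw [hF1, hb] at h10
      exact Subtype.ext (Ideal.mem_bot.mp (h10 ((Polynomial.aeval φ) p x).2))
    · have hkey := key (N - 1) x
      rw [Nat.sub_add_cancel hN, hFN] at hkey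
      exact Subtype.ext (Ideal.mem_bot.mp hkey)
  -- base change to `ℤ[1/ℓ]`
  set Φ : Module.End ℤ (loc ℓ ↥I) := lTensorAlgHom ℓ (↥I) φ with hΦdef
  have hpΦ : Polynomial.aeval Φ p = 0 := by
    have h := congrArg (lTensorAlgHom ℓ (↥I)) hpφ
    rwa [← Polynomial.aeval_algHom_apply, map_zero] at h
  -- the constant coefficient of `p` is a unit in `ℤ[1/ℓ]`
  have hunit : IsUnit (algebraMap ℤ (Zloc ℓ) (p.coeff 0)) := by
    rw [Polynomial.coeff_zero_eq_eval_zero, hp, Polynomial.eval_prod, map_prod]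
    apply Finset.prod_induction _ IsUnit (fun a b ha hb => IsUnit.mul ha hb) isUnit_one
    intro n _
    have he : Polynomial.eval 0 (Polynomial.X - Polynomial.C (ℓ ^ n)) = -ℓ ^ n := by simp
    rw [he, map_neg, map_pow]
    exact ((IsLocalization.Away.algebraMap_isUnit (S := Zloc ℓ) ℓ).pow n).neg
  obtain ⟨u, hu⟩ := hunit
  -- `p = divX p * X + C (coeff 0)` gives `B * Φ = -(algebraMap ℤ _ (p.coeff 0))`
  set B : Module.End ℤ (loc ℓ ↥I) := Polynomial.aeval Φ p.divX with hBdef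
  have hBΦ : B * Φ = -(algebraMap ℤ (Module.End ℤ (loc ℓ ↥I)) (p.coeff 0)) := by
    have h1 := congrArg (Polynomial.aeval Φ) (Polynomial.divX_mul_X_add p)
    rw [map_add, map_mul, Polynomial.aeval_X, Polynomial.aeval_C, hpΦ] at h1
    exact eq_neg_of_add_eq_zero_left h1
  have hcomm : B * Φ = Φ * B := by
    have h1 : (Polynomial.aeval Φ) (p.divX * Polynomial.X)
        = (Polynomial.aeval Φ) (Polynomial.X * p.divX) := by rw [mul_comm]
    rwa [map_mul, map_mul, Polynomial.aeval_X] at h1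
  -- the scalar action of `(algebraMap ℤ (Zloc ℓ) (p.coeff 0))⁻¹` as an endomorphism
  set s : Module.End ℤ (loc ℓ ↥I) :=
    { toFun := fun z => (↑u⁻¹ : Zloc ℓ) • z
      map_add' := fun a b => smul_add (↑u⁻¹ : Zloc ℓ) a b
      map_smul' := fun n z =>
        by
          rw [RingHom.id_apply]
          exact AddMonoidHom.map_zsmul
            (DistribMulAction.toAddMonoidHom (loc ℓ ↥I) (↑u⁻¹ : Zloc ℓ)) n z } with hsdef
  have hsalg1 : s * algebraMap ℤ (Module.End ℤ (loc ℓ ↥I)) (p.coeff 0) = 1 := by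
    apply LinearMap.ext
    intro z
    rw [Module.End.mul_apply]
    simp only [Module.algebraMap_end_apply, hsdef, LinearMap.coe_mk, AddHom.coe_mk,
      Module.End.one_apply]
    rw [← Int.cast_smul_eq_zsmul (Zloc ℓ) (p.coeff 0), ← eq_intCast (algebraMap ℤ (Zloc ℓ)),
      ← hu, smul_smul, u.inv_mul, one_smul]
  have hsalg2 : algebraMap ℤ (Module.End ℤ (loc ℓ ↥I)) (p.coeff 0) * s = 1 := by
    have hcen : algebraMap ℤ (Module.End ℤ (loc ℓ ↥I)) (p.coeff 0) * s
        = s * algebraMap ℤ (Module.End ℤ (loc ℓ ↥I)) (p.coeff 0) := by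
      rw [eq_intCast]
      exact Int.cast_commute _ s
    rw [hcen, hsalg1]
  have hsΦ : s * Φ = Φ * s := by
    apply LinearMap.ext
    intro z
    rw [Module.End.mul_apply, Module.End.mul_apply]
    induction z using TensorProduct.induction_on with
    | zero => simp
    | tmul a x =>
        show (↑u⁻¹ : Zloc ℓ) • (LinearMap.lTensor (Zloc ℓ) φ) (a ⊗ₜ x)
            = (LinearMap.lTensor (Zloc ℓ) φ) ((↑u⁻¹ : Zloc ℓ) • a ⊗ₜ x)
        rw [LinearMap.lTensor_tmul, TensorProduct.smul_tmul', TensorProduct.smul_tmul',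
          LinearMap.lTensor_tmul]
    | add z₁ z₂ h₁ h₂ => simp only [map_add, smul_add, h₁, h₂]
  -- conclude: `Φ` is invertible with inverse `-(B * s)`
  have hΦg : Φ * (-(B * s)) = 1 := by
    rw [mul_neg, ← mul_assoc, ← hcomm, hBΦ, neg_mul, neg_neg, hsalg2]
  have hgΦ : (-(B * s)) * Φ = 1 := by
    rw [neg_mul, mul_assoc, hsΦ, ← mul_assoc, hBΦ, neg_mul, neg_neg, hsalg2]
  have hΦunit : IsUnit Φ := ⟨⟨Φ, -(B * s), hΦg, hgΦ⟩, rfl⟩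
  have hbij : Function.Bijective Φ := (Module.End.isUnit_iff Φ).mp hΦunit
  exact hbij
end
end
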